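/- Let d ≥ 2 be an integer, r_0 > 0, and let J : [r_0, ∞) → ℝ be continuous. For r > r_0 define K(r) = −(r² / ((d−1) · √((r/r_0)^(2d−2) − 1))) · ∫_{r_0}^r J(ρ) · √((ρ/r_0)^(2d−2) − 1) dρ. Then K is differentiable on (r_0, ∞) and satisfies K'(r) + (K(r)/r) · h₂(r) = −(r²/(d−1)) · J(r) for all r > r_0, where h₂(r) = ((d−3)·(r/r_0)^(2d−2) + 2) / ((r/r_0)^(2d−2) − 1). -/

import Mathlib

open MeasureTheory Topology

/-- The function
`K(r) = −(r²/((d−1)√((r/r₀)^(2d−2) − 1))) ∫_{r₀}^r J(ρ)√((ρ/r₀)^(2d−2) − 1) dρ`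
solves the momentum constraint `K' + (K/r) h₂ = −(r²/(d−1)) J` on `(r₀, ∞)`,
where `h₂(r) = ((d−3)(r/r₀)^(2d−2) + 2)/((r/r₀)^(2d−2) − 1)`. -/
theorem momentum_constraint_strip_solution
    (d : ℕ) (hd : 2 ≤ d) (r₀ : ℝ) (hr₀ : 0 < r₀)
    (J : ℝ → ℝ) (hJ : ContinuousOn J (Set.Ici r₀))
    (K : ℝ → ℝ)
    (hK : ∀ r, K r =
      -(r ^ 2 / (((d : ℝ) - 1) * Real.sqrt ((r / r₀) ^ (2 * d - 2) - 1))) *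
        ∫ ρ in r₀..r, J ρ * Real.sqrt ((ρ / r₀) ^ (2 * d - 2) - 1)) :
    ∀ r ∈ Set.Ioi r₀,
      DifferentiableAt ℝ K r ∧
      deriv K r + (K r / r) *
          ((((d : ℝ) - 3) * (r / r₀) ^ (2 * d - 2) + 2) /
            ((r / r₀) ^ (2 * d - 2) - 1)) =
        -(r ^ 2 / ((d : ℝ) - 1)) * J r := by
  have hKF : K = fun r =>
      -(r ^ 2 / (((d : ℝ) - 1) * Real.sqrt ((r / r₀) ^ (2 * d - 2) - 1))) *
        ∫ ρ in r₀..r, J ρ * Real.sqrt ((ρ / r₀) ^ (2 * d - 2) - 1) := funext hK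
  subst hKF
  intro r hrmem
  have hr : r₀ < r := hrmem
  have hr0 : (0:ℝ) < r := hr₀.trans hr
  set n := 2 * d - 2 with hn
  have hncast : (n : ℝ) = 2 * (d:ℝ) - 2 := by
    rw [hn, Nat.cast_sub (by omega)]; push_cast; ring
  have hrr : 1 < r / r₀ := (one_lt_div hr₀).mpr hr
  have hp1 : 1 < (r / r₀) ^ n := one_lt_pow₀ hrr (by omega)
  have hg : 0 < (r / r₀) ^ n - 1 := sub_pos.mpr hp1
  have hs0 : 0 < Real.sqrt ((r / r₀) ^ n - 1) := Real.sqrt_pos.mpr hg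
  have hfc : ContinuousOn (fun ρ => J ρ * Real.sqrt ((ρ / r₀) ^ n - 1)) (Set.Ici r₀) := by
    apply hJ.mul
    exact (Real.continuous_sqrt.comp (by continuity)).continuousOn
  -- FTC
  have hint : IntervalIntegrable (fun ρ => J ρ * Real.sqrt ((ρ / r₀) ^ n - 1)) volume r₀ r := by
    apply (hfc.mono _).intervalIntegrable
    rw [Set.uIcc_of_le hr.le]
    exact Set.Icc_subset_Ici_self
  have hmeas : StronglyMeasurableAtFilter (fun ρ => J ρ * Real.sqrt ((ρ / r₀) ^ n - 1))
      (𝓝 r) volume :=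
    (hfc.mono Set.Ioi_subset_Ici_self).stronglyMeasurableAtFilter isOpen_Ioi r hrmem
  have hcontAt : ContinuousAt (fun ρ => J ρ * Real.sqrt ((ρ / r₀) ^ n - 1)) r :=
    hfc.continuousAt (Ici_mem_nhds hr)
  have hI : HasDerivAt (fun x => ∫ ρ in r₀..x, J ρ * Real.sqrt ((ρ / r₀) ^ n - 1))
      (J r * Real.sqrt ((r / r₀) ^ n - 1)) r :=
    intervalIntegral.integral_hasDerivAt_right hint hmeas hcontAt
  -- derivative of the prefactor
  have hG : HasDerivAt (fun x => (x / r₀) ^ n - 1)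
      ((n : ℝ) * (r / r₀) ^ (n - 1) * (1 / r₀)) r :=
    (((hasDerivAt_id r).div_const r₀).pow n).sub_const 1
  have hS : HasDerivAt (fun x => Real.sqrt ((x / r₀) ^ n - 1))
      ((n : ℝ) * (r / r₀) ^ (n - 1) * (1 / r₀) / (2 * Real.sqrt ((r / r₀) ^ n - 1))) r :=
    hG.sqrt hg.ne'
  have hD : HasDerivAt (fun x => ((d:ℝ) - 1) * Real.sqrt ((x / r₀) ^ n - 1))
      (((d:ℝ) - 1) * ((n : ℝ) * (r / r₀) ^ (n - 1) * (1 / r₀) /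
        (2 * Real.sqrt ((r / r₀) ^ n - 1)))) r := hS.const_mul _
  have hd1 : ((d:ℝ) - 1) ≠ 0 := by
    have : (2:ℝ) ≤ (d:ℝ) := by exact_mod_cast hd
    nlinarith
  have hDne : ((d:ℝ) - 1) * Real.sqrt ((r / r₀) ^ n - 1) ≠ 0 :=
    mul_ne_zero hd1 hs0.ne'
  have hA : HasDerivAt (fun x : ℝ => x ^ 2) (2 * r) r := by
    simpa using hasDerivAt_pow 2 r
  have hF := (hA.div hD hDne).neg.mul hI
  refine ⟨hF.differentiableAt, ?_⟩
  erw [hF.deriv]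
  beta_reduce
  simp only [Pi.neg_apply, Pi.div_apply]
  -- algebra: fold sqrt and the integral into opaque variables
  set s := Real.sqrt ((r / r₀) ^ n - 1) with hsdef
  set I := ∫ ρ in r₀..r, J ρ * Real.sqrt ((ρ / r₀) ^ n - 1) with hIdef
  have hs2 : s ^ 2 = (r / r₀) ^ n - 1 := Real.sq_sqrt hg.le
  have hpn : (r / r₀) ^ n = s ^ 2 + 1 := by rw [hs2]; ring
  have hpn1 : (r / r₀) ^ (n - 1) = (s ^ 2 + 1) * r₀ / r := by
    have hstep : (r / r₀) ^ (n - 1) * (r / r₀) = (r / r₀) ^ n := by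
      rw [← pow_succ]; congr 1; omega
    rw [hpn] at hstep
    field_simp at hstep ⊢
    linarith [hstep]
  rw [hncast, hpn, hpn1]
  field_simp
  ring
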